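/- For every k ∈ ℕ, the reachable set in time k satisfies R_k = e^{-iω v_0} · F^k({0}), where F^k denotes the k-fold iterate of the Hutchinson operator applied to the singleton {0} and e^{-iω v_0} · S denotes the image of the set S under multiplication by e^{-iω v_0}. -/

import Mathlib

/-- The phalanx map `f_v(x) = (e^{-iωv}/ρ)(x + 1)`. -/
noncomputable def phalanxMap (ρ ω v : ℝ) : ℂ → ℂ :=
  fun x => (Complex.exp (-((ω * v : ℝ) : ℂ) * Complex.I) / (ρ : ℂ)) * (x + 1)

/-- The Hutchinson operator `F(S) = ⋃_{v ∈ R} f_v(S)`. -/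
noncomputable def hutchinson (ρ ω : ℝ) (R : Set ℝ) (S : Set ℂ) : Set ℂ :=
  ⋃ v ∈ R, phalanxMap ρ ω v '' S

/-- The reachable set in time `k`:
`R_k = { Σ_{j=1}^{k} ρ^{-j} e^{-iω Σ_{n=0}^{j} v_n} : v_1, …, v_k ∈ R }`, with `v_0`
the fixed initial orientation (so `R_0 = {0}`). -/
noncomputable def reachSet (ρ ω v₀ : ℝ) (R : Set ℝ) (k : ℕ) : Set ℂ :=
  { x | ∃ v : ℕ → ℝ, v 0 = v₀ ∧ (∀ n, 1 ≤ n → n ≤ k → v n ∈ R) ∧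
    x = ∑ j ∈ Finset.Icc 1 k, (1 / (ρ : ℂ) ^ j) *
      Complex.exp (-((ω * ∑ n ∈ Finset.range (j + 1), v n : ℝ) : ℂ) * Complex.I) }

noncomputable def auxSum (ρ ω : ℝ) (u : ℕ → ℝ) (k : ℕ) : ℂ :=
  ∑ j ∈ Finset.range k, (1 / (ρ : ℂ) ^ (j + 1)) *
    Complex.exp (-((ω * ∑ n ∈ Finset.range (j + 1), u n : ℝ) : ℂ) * Complex.I)

lemma exp_split (ω a b : ℝ) :
    Complex.exp (-((ω * (a + b) : ℝ) : ℂ) * Complex.I)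
      = Complex.exp (-((ω * a : ℝ) : ℂ) * Complex.I) *
        Complex.exp (-((ω * b : ℝ) : ℂ) * Complex.I) := by
  rw [← Complex.exp_add]
  congr 1
  push_cast
  ring

lemma key (ρ ω w : ℝ) (u u' : ℕ → ℝ) (k : ℕ)
    (h0 : u' 0 = w) (hs : ∀ n, u' (n + 1) = u n) :
    phalanxMap ρ ω w (auxSum ρ ω u k) = auxSum ρ ω u' (k + 1) := by
  unfold phalanxMap auxSum
  rw [Finset.sum_range_succ' (fun j => (1 / (ρ : ℂ) ^ (j + 1)) *
    Complex.exp (-((ω * ∑ n ∈ Finset.range (j + 1), u' n : ℝ) : ℂ) * Complex.I)) k]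
  rw [mul_add, mul_one, Finset.mul_sum]
  congr 1
  · apply Finset.sum_congr rfl
    intro j _
    have h : ∑ n ∈ Finset.range (j + 1 + 1), u' n
        = w + ∑ n ∈ Finset.range (j + 1), u n := by
      rw [Finset.sum_range_succ', h0]
      rw [Finset.sum_congr rfl (fun n _ => hs n)]
      ring
    rw [h, exp_split]
    ring
  · rw [Finset.sum_range_one, h0]
    ring

lemma iterate_eq (ρ ω : ℝ) (R : Set ℝ) (k : ℕ) :
    (hutchinson ρ ω R)^[k] {0} =
      { x : ℂ | ∃ u : ℕ → ℝ, (∀ n, n < k → u n ∈ R) ∧ x = auxSum ρ ω u k } := by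
  induction k with
  | zero =>
    ext x
    simp only [Function.iterate_zero, id_eq, Set.mem_singleton_iff, Set.mem_setOf_eq]
    constructor
    · rintro rfl
      exact ⟨fun _ => 0, fun n hn => absurd hn (Nat.not_lt_zero n), by simp [auxSum]⟩
    · rintro ⟨u, -, rfl⟩; simp [auxSum]
  | succ k ih =>
    rw [Function.iterate_succ_apply', ih]
    ext x
    simp only [hutchinson, Set.mem_iUnion, Set.mem_image, Set.mem_setOf_eq]
    constructor
    · rintro ⟨w, hw, y, ⟨u, huR, rfl⟩, rfl⟩
      refine ⟨fun n => if n = 0 then w else u (n - 1), ?_, ?_⟩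
      · intro n hn
        rcases Nat.eq_zero_or_pos n with h0 | h0
        · simpa [h0] using hw
        · have : n - 1 < k := by omega
          simpa [Nat.pos_iff_ne_zero.mp h0] using huR _ this
      · exact (key ρ ω w u (fun n => if n = 0 then w else u (n - 1)) k (by simp)
          (fun n => by simp))
    · rintro ⟨u, huR, rfl⟩
      exact ⟨u 0, huR 0 (Nat.succ_pos k), auxSum ρ ω (fun n => u (n + 1)) k,
        ⟨fun n => u (n + 1), fun n hn => huR _ (by omega), rfl⟩,
        key ρ ω (u 0) (fun n => u (n + 1)) u k rfl (fun n => rfl)⟩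

lemma main_sum (ρ ω : ℝ) (v u : ℕ → ℝ) (k : ℕ) (hs : ∀ n, v (n + 1) = u n) :
    ∑ j ∈ Finset.Icc 1 k, (1 / (ρ : ℂ) ^ j) *
      Complex.exp (-((ω * ∑ n ∈ Finset.range (j + 1), v n : ℝ) : ℂ) * Complex.I)
    = Complex.exp (-((ω * v 0 : ℝ) : ℂ) * Complex.I) * auxSum ρ ω u k := by
  unfold auxSum
  rw [Finset.mul_sum, ← Finset.Ico_add_one_right_eq_Icc, Finset.sum_Ico_eq_sum_range]
  apply Finset.sum_congr rfl
  intro j _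
  have h : ∑ n ∈ Finset.range (1 + j + 1), v n
      = v 0 + ∑ n ∈ Finset.range (j + 1), u n := by
    rw [show 1 + j + 1 = (j + 1) + 1 by ring, Finset.sum_range_succ']
    rw [Finset.sum_congr rfl (fun n _ => hs n)]
    ring
  rw [h, exp_split]
  ring


/-- For every `k ∈ ℕ`, the reachable set in time `k` satisfies
`R_k = e^{-iω v₀} · F^k({0})`, where `F^k` is the `k`-fold iterate of the Hutchinson
operator applied to `{0}`. -/
theorem reachSet_eq_iterate_hutchinson (ρ ω v₀ : ℝ) (hρ : 1 < ρ)
    (R : Set ℝ) (hR : R ⊆ Set.Icc 0 1) (k : ℕ) :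
    reachSet ρ ω v₀ R k =
      (fun x : ℂ => Complex.exp (-((ω * v₀ : ℝ) : ℂ) * Complex.I) * x) ''
        ((hutchinson ρ ω R)^[k] {0}) := by
  rw [iterate_eq]
  ext x
  simp only [reachSet, Set.mem_setOf_eq, Set.mem_image]
  constructor
  · rintro ⟨v, hv0, hvR, rfl⟩
    refine ⟨auxSum ρ ω (fun n => v (n + 1)) k,
      ⟨fun n => v (n + 1), fun n hn => hvR (n + 1) (by omega) (by omega), rfl⟩, ?_⟩
    rw [main_sum ρ ω v (fun n => v (n + 1)) k (fun n => rfl), hv0]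
  · rintro ⟨y, ⟨u, huR, rfl⟩, rfl⟩
    refine ⟨fun n => if n = 0 then v₀ else u (n - 1), by simp, ?_, ?_⟩
    · intro n h1 h2
      have : n - 1 < k := by omega
      simpa [Nat.pos_iff_ne_zero.mp h1] using huR _ this
    · rw [main_sum ρ ω _ u k (fun n => by simp)]
      simp
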